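/- arXiv:0905.0796 — 2 statements merged into one kernel-verified Lean document; each statement's English description precedes it below -/
import Mathlib

section
/- The value function F(α,β) := Φ_{α,β}(x_{α,β}) is differentiable on the open quadrant α > 0, β > 0, and its partial derivatives satisfy ∂F/∂α = ‖x_{α,β}‖_{ℓ¹} and ∂F/∂β = (1/2)‖x_{α,β}‖_{ℓ²}². -/
noncomputable section

open Filter Topology

/-- `ℓ²(ℕ, ℝ)`. -/
abbrev ltwo : Type := lp (fun _ : ℕ => ℝ) 2

/-- `x ∈ ℓ¹`. -/
def inL1 (x : ltwo) : Prop := Memℓp (fun i => x i) 1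

/-- The `ℓ¹`-norm `‖x‖_{ℓ¹} = ∑ |xᵢ|` (junk value if `x ∉ ℓ¹`). -/
noncomputable def l1norm (x : ltwo) : ℝ := ∑' i, |x i|

/-- The elastic-net functional `Φ_{α,β}(x) = ½‖Kx − y‖² + α‖x‖₁ + (β/2)‖x‖₂²`,
real-valued on its effective domain `ℓ¹ ∩ ℓ²` (the convention `Φ = +∞` off `ℓ¹` is
implemented by restricting all statements to `inL1`). -/
noncomputable def Phi {H : Type*} [NormedAddCommGroup H] [InnerProductSpace ℝ H]
    (K : ltwo →L[ℝ] H) (y : H) (α β : ℝ) (x : ltwo) : ℝ :=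
  (1 / 2) * ‖K x - y‖ ^ 2 + α * l1norm x + (β / 2) * ‖x‖ ^ 2

/-- `x` is a minimizer of `Φ_{α,β}` over `ℓ²` (with the `+∞` convention off `ℓ¹`). -/
def IsMinimizer {H : Type*} [NormedAddCommGroup H] [InnerProductSpace ℝ H]
    (K : ltwo →L[ℝ] H) (y : H) (α β : ℝ) (x : ltwo) : Prop :=
  inL1 x ∧ ∀ z : ltwo, inL1 z → Phi K y α β x ≤ Phi K y α β z

/-! ### Auxiliary lemmas -/

lemma inL1_summable {x : ltwo} (h : inL1 x) : Summable fun i => |x i| := by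
  have := (memℓp_gen_iff (E := fun _ : ℕ => ℝ) (p := 1) (by norm_num)).1 h
  simpa using this

lemma l1norm_nonneg (x : ltwo) : 0 ≤ l1norm x := tsum_nonneg fun i => abs_nonneg _

lemma inL1_zero : inL1 0 := by
  have : Memℓp (0 : ∀ _ : ℕ, ℝ) 1 := zero_memℓp
  simp only [inL1, lp.coeFn_zero]
  exact this

lemma l1norm_zero : l1norm 0 = 0 := by simp [l1norm]

lemma inL1_mid {x z : ltwo} (hx : inL1 x) (hz : inL1 z) : inL1 ((2⁻¹ : ℝ) • (x + z)) := by
  have : Memℓp (⇑((2⁻¹ : ℝ) • (x + z))) 1 := by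
    rw [lp.coeFn_smul, lp.coeFn_add]
    exact (hx.add hz).const_smul _
  exact this

lemma l1norm_mid {x z : ltwo} (hx : inL1 x) (hz : inL1 z) :
    l1norm ((2⁻¹ : ℝ) • (x + z)) ≤ 2⁻¹ * l1norm x + 2⁻¹ * l1norm z := by
  have hsx := inL1_summable hx
  have hsz := inL1_summable hz
  have h1 : ∀ i, |((2⁻¹ : ℝ) • (x + z)) i| ≤ 2⁻¹ * |x i| + 2⁻¹ * |z i| := by
    intro i
    rw [lp.coeFn_smul, Pi.smul_apply, lp.coeFn_add, Pi.add_apply]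
    rw [smul_eq_mul, abs_mul]
    rw [abs_of_pos (by norm_num : (0:ℝ) < 2⁻¹)]
    have := abs_add_le (x i) (z i)
    nlinarith [abs_nonneg (x i + z i)]
  calc l1norm ((2⁻¹ : ℝ) • (x + z)) ≤ ∑' i, (2⁻¹ * |x i| + 2⁻¹ * |z i|) := by
        apply Summable.tsum_le_tsum h1
        · exact inL1_summable (inL1_mid hx hz)
        · exact (hsx.mul_left _).add (hsz.mul_left _)
    _ = 2⁻¹ * l1norm x + 2⁻¹ * l1norm z := by
        rw [Summable.tsum_add (hsx.mul_left _) (hsz.mul_left _), tsum_mul_left, tsum_mul_left,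
          l1norm, l1norm]

lemma Phi_shift {H : Type*} [NormedAddCommGroup H] [InnerProductSpace ℝ H]
    (K : ltwo →L[ℝ] H) (y : H) (a b a' b' : ℝ) (x : ltwo) :
    Phi K y a' b' x = Phi K y a b x + (a' - a) * l1norm x + ((b' - b) / 2) * ‖x‖ ^ 2 := by
  simp only [Phi]; ring

lemma strong_min {H : Type*} [NormedAddCommGroup H] [InnerProductSpace ℝ H]
    {K : ltwo →L[ℝ] H} {y : H} {a b : ℝ} {x : ltwo}
    (hm : IsMinimizer K y a b x) (ha : 0 ≤ a) {z : ltwo} (hz : inL1 z) :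
    Phi K y a b x + (b / 4) * ‖z - x‖ ^ 2 ≤ Phi K y a b z := by
  set m := (2⁻¹ : ℝ) • (x + z) with hm_def
  have h1 : Phi K y a b x ≤ Phi K y a b m := hm.2 m (inL1_mid hm.1 hz)
  have hl1 : l1norm m ≤ 2⁻¹ * l1norm x + 2⁻¹ * l1norm z := l1norm_mid hm.1 hz
  have hKm : K m - y = (2⁻¹ : ℝ) • ((K x - y) + (K z - y)) := by
    rw [hm_def, map_smul, map_add]
    rw [smul_add, smul_add]
    module
  have hquad : ‖K m - y‖ ^ 2 ≤ 2⁻¹ * ‖K x - y‖ ^ 2 + 2⁻¹ * ‖K z - y‖ ^ 2 := by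
    have h2 : ‖K m - y‖ ≤ 2⁻¹ * (‖K x - y‖ + ‖K z - y‖) := by
      rw [hKm, norm_smul]
      simp only [norm_inv, Real.norm_ofNat]
      gcongr
      exact norm_add_le _ _
    nlinarith [norm_nonneg (K m - y), norm_nonneg (K x - y), norm_nonneg (K z - y),
      sq_nonneg (‖K x - y‖ - ‖K z - y‖)]
  have hpar := parallelogram_law_with_norm ℝ x z
  have hmn : ‖m‖ = 2⁻¹ * ‖x + z‖ := by
    rw [hm_def, norm_smul]; simp
  have hsq : ‖m‖ ^ 2 = 2⁻¹ * ‖x‖ ^ 2 + 2⁻¹ * ‖z‖ ^ 2 - 4⁻¹ * ‖x - z‖ ^ 2 := by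
    rw [hmn]; nlinarith [hpar]
  have hzx : ‖z - x‖ = ‖x - z‖ := norm_sub_rev _ _
  simp only [Phi] at h1 ⊢
  rw [hzx]
  rw [hsq] at h1
  have hl1a := mul_le_mul_of_nonneg_left hl1 ha
  linarith [hquad, hl1a]

/-! ### Main theorem -/

set_option maxHeartbeats 2000000 in
/-- Differentiability of the value function `F(α,β) = Φ_{α,β}(x_{α,β})` on the open
quadrant, with `∂F/∂α = ‖x_{α,β}‖₁` and `∂F/∂β = ½‖x_{α,β}‖₂²`; the total (Fréchet)
derivative is the linear map `(a,b) ↦ ‖x_{α,β}‖₁ · a + ½‖x_{α,β}‖₂² · b`. -/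
theorem elasticNet_value_function_differentiable
    {H : Type*} [NormedAddCommGroup H] [InnerProductSpace ℝ H]
    (K : ltwo →L[ℝ] H) (y : H)
    (xmin : ℝ → ℝ → ltwo)
    (hxmin : ∀ α β : ℝ, 0 < α → 0 < β → IsMinimizer K y α β (xmin α β))
    (α β : ℝ) (hα : 0 < α) (hβ : 0 < β) :
    HasFDerivAt (fun p : ℝ × ℝ => Phi K y p.1 p.2 (xmin p.1 p.2))
        (l1norm (xmin α β) • ContinuousLinearMap.fst ℝ ℝ ℝ +
          ((1 / 2) * ‖xmin α β‖ ^ 2) • ContinuousLinearMap.snd ℝ ℝ ℝ)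
        (α, β) ∧
      HasDerivAt (fun a : ℝ => Phi K y a β (xmin a β)) (l1norm (xmin α β)) α ∧
      HasDerivAt (fun b : ℝ => Phi K y α b (xmin α b)) ((1 / 2) * ‖xmin α β‖ ^ 2) β := by
  classical
  set xp : ltwo := xmin α β with hxp
  set N1 : ℝ × ℝ → ℝ := fun q => l1norm (xmin q.1 q.2) with hN1def
  set N2 : ℝ × ℝ → ℝ := fun q => ‖xmin q.1 q.2‖ ^ 2 with hN2def
  set G : ℝ × ℝ → ℝ := fun q => (1 / 2) * ‖K (xmin q.1 q.2) - y‖ ^ 2 with hGdef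
  set F : ℝ × ℝ → ℝ := fun q => Phi K y q.1 q.2 (xmin q.1 q.2) with hFdef
  set Y : ℝ := ‖y‖ ^ 2 with hYdef
  have hY : 0 ≤ Y := sq_nonneg _
  set B1 : ℝ := Y / α with hB1def
  set B2 : ℝ := 2 * Y / β with hB2def
  have hB1 : 0 ≤ B1 := by positivity
  have hB2 : 0 ≤ B2 := by positivity
  -- key exchange inequality
  have key : ∀ u v : ℝ × ℝ, 0 < u.1 → 0 < u.2 → 0 < v.1 → 0 < v.2 →
      F v ≤ F u + (v.1 - u.1) * N1 u + ((v.2 - u.2) / 2) * N2 u := by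
    intro u v hu1 hu2 hv1 hv2
    have h1 := (hxmin v.1 v.2 hv1 hv2).2 (xmin u.1 u.2) (hxmin u.1 u.2 hu1 hu2).1
    calc F v ≤ Phi K y v.1 v.2 (xmin u.1 u.2) := h1
      _ = F u + (v.1 - u.1) * N1 u + ((v.2 - u.2) / 2) * N2 u :=
        Phi_shift K y u.1 u.2 v.1 v.2 _
  -- a priori bounds from comparison with 0
  have bounds : ∀ u : ℝ × ℝ, 0 < u.1 → 0 < u.2 →
      u.1 * N1 u ≤ Y / 2 ∧ (u.2 / 2) * N2 u ≤ Y / 2 := by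
    intro u hu1 hu2
    have h0 : F u ≤ Phi K y u.1 u.2 0 := (hxmin u.1 u.2 hu1 hu2).2 0 inL1_zero
    have hPhi0 : Phi K y u.1 u.2 0 = Y / 2 := by
      simp [Phi, l1norm_zero, hYdef]
      ring
    have hFu : F u = G u + u.1 * N1 u + (u.2 / 2) * N2 u := rfl
    have q1 : 0 ≤ G u := by positivity
    have q2 : 0 ≤ N1 u := l1norm_nonneg _
    have q3 : 0 ≤ N2 u := sq_nonneg _
    have m1 : 0 ≤ u.1 * N1 u := mul_nonneg hu1.le q2
    have m2 : 0 ≤ (u.2 / 2) * N2 u := mul_nonneg (by linarith) q3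
    rw [hPhi0, hFu] at h0
    constructor <;> linarith
  -- bounds on N1, N2 uniformly near (α, β)
  have hNb : ∀ u : ℝ × ℝ, 0 < u.1 → 0 < u.2 → α / 2 < u.1 → β / 2 < u.2 →
      N1 u ≤ B1 ∧ N2 u ≤ B2 := by
    intro u hu1 hu2 hu1' hu2'
    obtain ⟨b1, b2⟩ := bounds u hu1 hu2
    have q2 : 0 ≤ N1 u := l1norm_nonneg _
    have q3 : 0 ≤ N2 u := sq_nonneg _
    constructor
    · rw [hB1def, le_div_iff₀ hα]
      nlinarith [mul_nonneg (by linarith : (0:ℝ) ≤ 2 * u.1 - α) q2]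
    · rw [hB2def, le_div_iff₀ hβ]
      nlinarith [mul_nonneg (by linarith : (0:ℝ) ≤ 2 * u.2 - β) q3]
  have hNbp : N1 (α, β) ≤ B1 ∧ N2 (α, β) ≤ B2 :=
    hNb (α, β) hα hβ (by simpa using half_lt_self hα) (by simpa using half_lt_self hβ)
  -- the open quadrant neighborhood
  have hquadopen : ∀ᶠ q : ℝ × ℝ in 𝓝 (α, β),
      0 < q.1 ∧ 0 < q.2 ∧ α / 2 < q.1 ∧ β / 2 < q.2 := by
    have h1 : ∀ᶠ q : ℝ × ℝ in 𝓝 (α, β), α / 2 < q.1 :=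
      (continuous_fst.tendsto (α, β)).eventually (lt_mem_nhds (by simpa using half_lt_self hα))
    have h2 : ∀ᶠ q : ℝ × ℝ in 𝓝 (α, β), β / 2 < q.2 :=
      (continuous_snd.tendsto (α, β)).eventually (lt_mem_nhds (by simpa using half_lt_self hβ))
    filter_upwards [h1, h2] with q hq1 hq2
    exact ⟨by linarith, by linarith, hq1, hq2⟩
  -- continuity of the minimizer map at (α, β), via strong convexity
  have contest : ∀ᶠ q : ℝ × ℝ in 𝓝 (α, β), ‖xmin q.1 q.2 - xp‖ ^ 2 ≤
      (|q.1 - α| + |q.2 - β|) * (B1 + B2) / (β / 4) := by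
    filter_upwards [hquadopen] with q hq
    obtain ⟨hq1, hq2, hq1', hq2'⟩ := hq
    have hs := strong_min (hxmin α β hα hβ) hα.le (hxmin q.1 q.2 hq1 hq2).1
    have hshift := Phi_shift K y q.1 q.2 α β (xmin q.1 q.2)
    have hkey := key (α, β) q hα hβ hq1 hq2
    obtain ⟨hb1, hb2⟩ := hNb q hq1 hq2 hq1' hq2'
    obtain ⟨hb1p, hb2p⟩ := hNbp
    have q2 : 0 ≤ N1 q := l1norm_nonneg _
    have q3 : 0 ≤ N2 q := sq_nonneg _
    have q2p : 0 ≤ N1 (α, β) := l1norm_nonneg _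
    have q3p : 0 ≤ N2 (α, β) := sq_nonneg _
    have hd1 : |N1 (α, β) - N1 q| ≤ B1 := abs_sub_le_iff.2 ⟨by linarith, by linarith⟩
    have hd2 : |N2 (α, β) - N2 q| ≤ B2 := abs_sub_le_iff.2 ⟨by linarith, by linarith⟩
    have e1 : (q.1 - α) * (N1 (α, β) - N1 q) ≤ |q.1 - α| * B1 :=
      calc (q.1 - α) * (N1 (α, β) - N1 q) ≤ |(q.1 - α) * (N1 (α, β) - N1 q)| := le_abs_self _
        _ = |q.1 - α| * |N1 (α, β) - N1 q| := abs_mul _ _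
        _ ≤ |q.1 - α| * B1 := mul_le_mul_of_nonneg_left hd1 (abs_nonneg _)
    have e2 : (q.2 - β) * (N2 (α, β) - N2 q) ≤ |q.2 - β| * B2 :=
      calc (q.2 - β) * (N2 (α, β) - N2 q) ≤ |(q.2 - β) * (N2 (α, β) - N2 q)| := le_abs_self _
        _ = |q.2 - β| * |N2 (α, β) - N2 q| := abs_mul _ _
        _ ≤ |q.2 - β| * B2 := mul_le_mul_of_nonneg_left hd2 (abs_nonneg _)
    -- combine: hs says  Phi_(α,β)(xp) + β/4 ‖xq - xp‖² ≤ Phi_(α,β)(xmin q)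
    -- Phi_(α,β)(xmin q) = F q + (α - q.1) N1 q + ((β - q.2)/2) N2 q   (hshift)
    -- F q ≤ F (α,β) + (q.1 - α) N1 (α,β) + ((q.2 - β)/2) N2 (α,β)   (hkey)
    have hFp : Phi K y α β xp = F (α, β) := rfl
    have hFq : Phi K y q.1 q.2 (xmin q.1 q.2) = F q := rfl
    rw [le_div_iff₀ (by positivity)]
    have hl1q : N1 q = l1norm (xmin q.1 q.2) := rfl
    have hl2q : N2 q = ‖xmin q.1 q.2‖ ^ 2 := rfl
    rw [hFq, ← hl1q, ← hl2q] at hshift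
    rw [hFp] at hs
    linarith [hs, hshift, hkey, e1, e2, mul_nonneg (abs_nonneg (q.1 - α)) hB2,
      mul_nonneg (abs_nonneg (q.2 - β)) hB1, mul_nonneg (abs_nonneg (q.2 - β)) hB2,
      mul_nonneg (abs_nonneg (q.1 - α)) hB1]
  have hsqz : Tendsto (fun q : ℝ × ℝ => ‖xmin q.1 q.2 - xp‖ ^ 2) (𝓝 (α, β)) (𝓝 0) := by
    apply squeeze_zero' (Eventually.of_forall fun q => sq_nonneg _) contest
    have hc : Continuous (fun q : ℝ × ℝ => (|q.1 - α| + |q.2 - β|) * (B1 + B2) / (β / 4)) := by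
      fun_prop
    have h0 := hc.tendsto (α, β)
    simpa using h0
  have hxc : Tendsto (fun q : ℝ × ℝ => xmin q.1 q.2) (𝓝 (α, β)) (𝓝 xp) := by
    rw [tendsto_iff_norm_sub_tendsto_zero]
    have h := (Real.continuous_sqrt.tendsto 0).comp hsqz
    simp only [Real.sqrt_zero, Function.comp_def] at h
    exact h.congr fun q => Real.sqrt_sq (norm_nonneg _)
  -- continuity of N2, G, F, N1
  have hN2c : Tendsto N2 (𝓝 (α, β)) (𝓝 (N2 (α, β))) := hxc.norm.pow 2
  have hGc : Tendsto G (𝓝 (α, β)) (𝓝 (G (α, β))) :=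
    ((((K.continuous.tendsto xp).comp hxc).sub tendsto_const_nhds).norm.pow 2).const_mul _
  have hFc : Tendsto F (𝓝 (α, β)) (𝓝 (F (α, β))) := by
    rw [tendsto_iff_norm_sub_tendsto_zero]
    apply squeeze_zero' (Eventually.of_forall fun q => norm_nonneg _)
      (g := fun q : ℝ × ℝ => (|q.1 - α| + |q.2 - β|) * (B1 + B2))
    · filter_upwards [hquadopen] with q hq
      obtain ⟨hq1, hq2, hq1', hq2'⟩ := hq
      have hkey1 := key (α, β) q hα hβ hq1 hq2
      have hkey2 := key q (α, β) hq1 hq2 hα hβ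
      obtain ⟨hb1, hb2⟩ := hNb q hq1 hq2 hq1' hq2'
      obtain ⟨hb1p, hb2p⟩ := hNbp
      have q2 : 0 ≤ N1 q := l1norm_nonneg _
      have q3 : 0 ≤ N2 q := sq_nonneg _
      have q2p : 0 ≤ N1 (α, β) := l1norm_nonneg _
      have q3p : 0 ≤ N2 (α, β) := sq_nonneg _
      have a1 : (q.1 - α) * N1 (α, β) ≤ |q.1 - α| * B1 :=
        calc (q.1 - α) * N1 (α, β) ≤ |q.1 - α| * N1 (α, β) :=
              mul_le_mul_of_nonneg_right (le_abs_self _) q2p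
          _ ≤ |q.1 - α| * B1 := mul_le_mul_of_nonneg_left hb1p (abs_nonneg _)
      have a2 : (q.2 - β) * N2 (α, β) ≤ |q.2 - β| * B2 :=
        calc (q.2 - β) * N2 (α, β) ≤ |q.2 - β| * N2 (α, β) :=
              mul_le_mul_of_nonneg_right (le_abs_self _) q3p
          _ ≤ |q.2 - β| * B2 := mul_le_mul_of_nonneg_left hb2p (abs_nonneg _)
      have a3 : (α - q.1) * N1 q ≤ |q.1 - α| * B1 :=
        calc (α - q.1) * N1 q ≤ |α - q.1| * N1 q :=
              mul_le_mul_of_nonneg_right (le_abs_self _) q2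
          _ = |q.1 - α| * N1 q := by rw [abs_sub_comm]
          _ ≤ |q.1 - α| * B1 := mul_le_mul_of_nonneg_left hb1 (abs_nonneg _)
      have a4 : (β - q.2) * N2 q ≤ |q.2 - β| * B2 :=
        calc (β - q.2) * N2 q ≤ |β - q.2| * N2 q :=
              mul_le_mul_of_nonneg_right (le_abs_self _) q3
          _ = |q.2 - β| * N2 q := by rw [abs_sub_comm]
          _ ≤ |q.2 - β| * B2 := mul_le_mul_of_nonneg_left hb2 (abs_nonneg _)
      rw [Real.norm_eq_abs]
      have hcross1 : 0 ≤ |q.1 - α| * B2 := mul_nonneg (abs_nonneg _) hB2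
      have hcross2 : 0 ≤ |q.2 - β| * B1 := mul_nonneg (abs_nonneg _) hB1
      have hcross3 : 0 ≤ |q.2 - β| * B2 := mul_nonneg (abs_nonneg _) hB2
      have hcross4 : 0 ≤ |q.1 - α| * B1 := mul_nonneg (abs_nonneg _) hB1
      rw [abs_sub_le_iff]
      constructor
      · linarith [hkey1, a1, a2, hcross1, hcross2, hcross3, hcross4]
      · linarith [hkey2, a3, a4, hcross1, hcross2, hcross3, hcross4]
    · have hc : Continuous (fun q : ℝ × ℝ => (|q.1 - α| + |q.2 - β|) * (B1 + B2)) := by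
        fun_prop
      have h0 := hc.tendsto (α, β)
      simpa using h0
  have hN1c : Tendsto N1 (𝓝 (α, β)) (𝓝 (N1 (α, β))) := by
    have hval : (F (α, β) - G (α, β) - ((α, β).2 / 2) * N2 (α, β)) / (α, β).1 = N1 (α, β) := by
      have : F (α, β) = G (α, β) + α * N1 (α, β) + (β / 2) * N2 (α, β) := rfl
      rw [this]
      rw [div_eq_iff (ne_of_gt hα)]
      ring
    have hlim : Tendsto (fun q : ℝ × ℝ => (F q - G q - (q.2 / 2) * N2 q) / q.1) (𝓝 (α, β))
        (𝓝 ((F (α, β) - G (α, β) - ((α, β).2 / 2) * N2 (α, β)) / (α, β).1)) := by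
      apply Tendsto.div
      · exact (hFc.sub hGc).sub (((continuous_snd.tendsto (α, β)).div_const 2).mul hN2c)
      · exact continuous_fst.tendsto (α, β)
      · exact ne_of_gt hα
    rw [hval] at hlim
    apply hlim.congr'
    filter_upwards [hquadopen] with q hq
    obtain ⟨hq1, -, -, -⟩ := hq
    have : F q = G q + q.1 * N1 q + (q.2 / 2) * N2 q := rfl
    rw [this, div_eq_iff (ne_of_gt hq1)]
    ring
  -- the Fréchet derivative
  set L : ℝ × ℝ →L[ℝ] ℝ := l1norm xp • ContinuousLinearMap.fst ℝ ℝ ℝ +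
      ((1 / 2) * ‖xp‖ ^ 2) • ContinuousLinearMap.snd ℝ ℝ ℝ with hLdef
  have hLapp : ∀ v : ℝ × ℝ, L v = N1 (α, β) * v.1 + (N2 (α, β) / 2) * v.2 := by
    intro v
    have hN1p : N1 (α, β) = l1norm xp := rfl
    have hN2p : N2 (α, β) = ‖xp‖ ^ 2 := rfl
    rw [hN1p, hN2p, hLdef]
    simp only [ContinuousLinearMap.add_apply, ContinuousLinearMap.smul_apply,
      ContinuousLinearMap.coe_fst', ContinuousLinearMap.coe_snd', smul_eq_mul]
    ring
  have hFD : HasFDerivAt F L (α, β) := by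
    rw [hasFDerivAt_iff_isLittleO, Asymptotics.isLittleO_iff]
    intro c hc
    have hD : Tendsto (fun q : ℝ × ℝ => |N1 q - N1 (α, β)| + |N2 q - N2 (α, β)| / 2)
        (𝓝 (α, β)) (𝓝 0) := by
      have h1 : Tendsto (fun q : ℝ × ℝ => |N1 q - N1 (α, β)|) (𝓝 (α, β)) (𝓝 0) := by
        have h := (hN1c.sub (tendsto_const_nhds (x := N1 (α, β)))).abs
        simpa using h
      have h2 : Tendsto (fun q : ℝ × ℝ => |N2 q - N2 (α, β)| / 2) (𝓝 (α, β)) (𝓝 0) := by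
        have h := ((hN2c.sub (tendsto_const_nhds (x := N2 (α, β)))).abs).div_const 2
        simpa using h
      simpa using h1.add h2
    have hDc : ∀ᶠ q : ℝ × ℝ in 𝓝 (α, β),
        |N1 q - N1 (α, β)| + |N2 q - N2 (α, β)| / 2 < c := hD.eventually (gt_mem_nhds hc)
    filter_upwards [hquadopen, hDc] with q hq hDq
    obtain ⟨hq1, hq2, -, -⟩ := hq
    have hkey1 := key (α, β) q hα hβ hq1 hq2
    have hkey2 := key q (α, β) hq1 hq2 hα hβ
    have hLv := hLapp (q - (α, β))
    have hv1 : (q - (α, β)).1 = q.1 - α := rfl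
    have hv2 : (q - (α, β)).2 = q.2 - β := rfl
    rw [hv1, hv2] at hLv
    have hn1 : |q.1 - α| ≤ ‖q - (α, β)‖ := by
      have := norm_fst_le (q - (α, β))
      rwa [hv1, Real.norm_eq_abs] at this
    have hn2 : |q.2 - β| ≤ ‖q - (α, β)‖ := by
      have := norm_snd_le (q - (α, β))
      rwa [hv2, Real.norm_eq_abs] at this
    rw [Real.norm_eq_abs, abs_le]
    have hnn : (0:ℝ) ≤ ‖q - (α, β)‖ := norm_nonneg _
    constructor
    · -- lower bound
      have t1 : (q.1 - α) * (N1 q - N1 (α, β)) ≥ -(‖q - (α, β)‖ * |N1 q - N1 (α, β)|) := by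
        have h := abs_mul (q.1 - α) (N1 q - N1 (α, β))
        have h2 : |(q.1 - α) * (N1 q - N1 (α, β))| ≤ ‖q - (α, β)‖ * |N1 q - N1 (α, β)| := by
          rw [h]; exact mul_le_mul_of_nonneg_right hn1 (abs_nonneg _)
        have h3 := neg_abs_le ((q.1 - α) * (N1 q - N1 (α, β)))
        linarith
      have t2 : (q.2 - β) * (N2 q - N2 (α, β)) ≥ -(‖q - (α, β)‖ * |N2 q - N2 (α, β)|) := by
        have h := abs_mul (q.2 - β) (N2 q - N2 (α, β))
        have h2 : |(q.2 - β) * (N2 q - N2 (α, β))| ≤ ‖q - (α, β)‖ * |N2 q - N2 (α, β)| := by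
          rw [h]; exact mul_le_mul_of_nonneg_right hn2 (abs_nonneg _)
        have h3 := neg_abs_le ((q.2 - β) * (N2 q - N2 (α, β)))
        linarith
      have hDle : ‖q - (α, β)‖ * (|N1 q - N1 (α, β)| + |N2 q - N2 (α, β)| / 2)
          ≤ ‖q - (α, β)‖ * c := mul_le_mul_of_nonneg_left hDq.le hnn
      -- F (α,β) ≤ F q + (α - q.1) N1 q + ((β - q.2)/2) N2 q  (hkey2)
      nlinarith [hkey2, hLv]
    · -- upper bound: from hkey1
      have : F q - F (α, β) - L (q - (α, β)) ≤ 0 := by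
        rw [hLv]; linarith [hkey1]
      nlinarith [mul_nonneg hc.le hnn]
  refine ⟨hFD, ?_, ?_⟩
  · have hg : HasDerivAt (fun a : ℝ => ((a, β) : ℝ × ℝ)) (1, 0) α :=
      (hasDerivAt_id α).prodMk (hasDerivAt_const α β)
    have h := hFD.comp_hasDerivAt α hg
    have : L (1, 0) = l1norm xp := by
      rw [hLapp]; simp [hN1def, hxp]
    rw [this] at h
    exact h
  · have hg : HasDerivAt (fun b : ℝ => ((α, b) : ℝ × ℝ)) (0, 1) β :=
      (hasDerivAt_const β α).prodMk (hasDerivAt_id β)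
    have h := hFD.comp_hasDerivAt β hg
    have : L (0, 1) = (1 / 2) * ‖xp‖ ^ 2 := by
      rw [hLapp]; simp [hN2def, hxp]; ring
    rw [this] at h
    exact h
end
end

section
/- Let x_η denote the R_η-minimizing solution of Kx = y†. For every η ≥ 0, if η_n ≥ 0 and η_n → η then x_{η_n} → x_η strongly in ℓ²; moreover the value function η ↦ η‖x_η‖_{ℓ¹} + (1/2)‖x_η‖_{ℓ²}² is differentiable with derivative equal to ‖x_η‖_{ℓ¹}. -/
noncomputable section

open Filter Topology

/-- The functional `R_η(x) = η‖x‖₁ + ½‖x‖₂²` (finite on `ℓ¹ ∩ ℓ²`). -/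
noncomputable def Rfun (η : ℝ) (x : ltwo) : ℝ := η * l1norm x + (1 / 2) * ‖x‖ ^ 2

/-- `x†` is the `R_η`-minimizing solution of `Kx = y†`: it solves the equation and
minimizes `R_η` among all solutions in `ℓ¹ ∩ ℓ²`. -/
def IsRMinSolution {H : Type*} [NormedAddCommGroup H] [InnerProductSpace ℝ H]
    (K : ltwo →L[ℝ] H) (ydag : H) (η : ℝ) (xdag : ltwo) : Prop :=
  inL1 xdag ∧ K xdag = ydag ∧
    ∀ z : ltwo, inL1 z → K z = ydag → Rfun η xdag ≤ Rfun η z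

lemma inL1.summable' {x : ltwo} (hx : inL1 x) : Summable fun i => |x i| := by
  have := Memℓp.summable (p := 1) (by norm_num) hx
  simpa [Real.norm_eq_abs] using this

lemma midpoint_inL1 {x z : ltwo} (hx : inL1 x) (hz : inL1 z) :
    inL1 ((1/2 : ℝ) • (x + z)) := by
  have h := (Memℓp.add hx hz).const_smul (𝕜 := ℝ) (1/2 : ℝ)
  have : (fun i => ((1/2 : ℝ) • (x + z)) i) = (1/2 : ℝ) • (⇑x + ⇑z) := by
    ext i; simp only [lp.coeFn_smul, lp.coeFn_add, Pi.smul_apply, Pi.add_apply, smul_eq_mul]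
  rw [inL1, this]; exact h

lemma l1norm_midpoint_le {x z : ltwo} (hx : inL1 x) (hz : inL1 z) :
    l1norm ((1/2 : ℝ) • (x + z)) ≤ (1/2) * l1norm x + (1/2) * l1norm z := by
  have hs : Summable fun i => (1/2) * |x i| + (1/2) * |z i| :=
    ((hx.summable').mul_left _).add ((hz.summable').mul_left _)
  have hle : ∀ i, |((1/2 : ℝ) • (x + z)) i| ≤ (1/2) * |x i| + (1/2) * |z i| := by
    intro i
    have : ((1/2 : ℝ) • (x + z)) i = (1/2 : ℝ) * (x i + z i) := by
      simp only [lp.coeFn_smul, lp.coeFn_add, Pi.smul_apply, Pi.add_apply, smul_eq_mul]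
    rw [this, abs_mul]
    have := abs_add_le (x i) (z i)
    rw [abs_of_nonneg (by norm_num : (0:ℝ) ≤ 1/2)]
    nlinarith [abs_nonneg (x i), abs_nonneg (z i)]
  calc l1norm ((1/2 : ℝ) • (x + z)) ≤ ∑' i, ((1/2) * |x i| + (1/2) * |z i|) :=
        Summable.tsum_le_tsum hle (midpoint_inL1 hx hz).summable' hs
    _ = (1/2) * l1norm x + (1/2) * l1norm z := by
        rw [Summable.tsum_add ((hx.summable').mul_left _) ((hz.summable').mul_left _),
          tsum_mul_left, tsum_mul_left]; rfl

section Helpers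

variable {H : Type*} [NormedAddCommGroup H] [InnerProductSpace ℝ H]
variable {K : ltwo →L[ℝ] H} {ydag : H}

lemma strongConvexIneq {η : ℝ} (hη : 0 ≤ η) {x z : ltwo}
    (hx : IsRMinSolution K ydag η x) (hz1 : inL1 z) (hz2 : K z = ydag) :
    Rfun η x + (1/4) * ‖z - x‖ ^ 2 ≤ Rfun η z := by
  set m : ltwo := (1/2 : ℝ) • (x + z) with hm
  have hm1 : inL1 m := midpoint_inL1 hx.1 hz1
  have hm2 : K m = ydag := by
    rw [hm, map_smul, map_add, hx.2.1, hz2]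
    module
  have hnorm : ‖m‖ ^ 2 = (1/2) * ‖x‖ ^ 2 + (1/2) * ‖z‖ ^ 2 - (1/4) * ‖z - x‖ ^ 2 := by
    have hpar := parallelogram_law_with_norm ℝ x z
    have h1 : ‖m‖ = |1/2| * ‖x + z‖ := by rw [hm, norm_smul, Real.norm_eq_abs]
    have h2 : ‖z - x‖ = ‖x - z‖ := norm_sub_rev z x
    rw [h1, h2]
    rw [abs_of_nonneg (by norm_num : (0:ℝ) ≤ 1/2)]
    nlinarith [hpar]
  have hmin := hx.2.2 m hm1 hm2
  have hl1 := l1norm_midpoint_le hx.1 hz1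
  have : Rfun η m ≤ (1/2) * Rfun η x + (1/2) * Rfun η z - (1/8) * ‖z - x‖ ^ 2 := by
    unfold Rfun
    have : η * l1norm m ≤ η * ((1/2) * l1norm x + (1/2) * l1norm z) :=
      mul_le_mul_of_nonneg_left hl1 hη
    nlinarith [hnorm]
  unfold Rfun at *
  nlinarith [hmin, this]

lemma crossEst {a b : ℝ} (ha0 : 0 ≤ a) (hb0 : 0 ≤ b) {xa xb : ltwo}
    (ha : IsRMinSolution K ydag a xa) (hb : IsRMinSolution K ydag b xb) :
    (1/4) * ‖xb - xa‖ ^ 2 ≤ (a - b) * (l1norm xb - l1norm xa) := by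
  have h1 := strongConvexIneq ha0 ha hb.1 hb.2.1
  have h2 := hb.2.2 xa ha.1 ha.2.1
  unfold Rfun at h1 h2
  nlinarith [h1, h2]

variable {xsol : ℝ → ltwo} (hxsol : ∀ η : ℝ, 0 ≤ η → IsRMinSolution K ydag η (xsol η))

include hxsol

lemma l1_mono {a b : ℝ} (ha : 0 ≤ a) (hab : a ≤ b) :
    l1norm (xsol b) ≤ l1norm (xsol a) := by
  rcases eq_or_lt_of_le hab with h | h
  · rw [h]
  · have hc := crossEst ha (ha.trans hab) (hxsol a ha) (hxsol b (ha.trans hab))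
    nlinarith [sq_nonneg ‖xsol b - xsol a‖, hc]

lemma dist_sq_le {a b : ℝ} (ha : 0 ≤ a) (hb : 0 ≤ b) :
    ‖xsol b - xsol a‖ ^ 2 ≤ 4 * |a - b| * l1norm (xsol 0) := by
  have hc := crossEst ha hb (hxsol a ha) (hxsol b hb)
  have hB1 : l1norm (xsol a) ≤ l1norm (xsol 0) := l1_mono hxsol le_rfl ha
  have hB2 : l1norm (xsol b) ≤ l1norm (xsol 0) := l1_mono hxsol le_rfl hb
  have h1 : 0 ≤ l1norm (xsol a) := l1norm_nonneg _
  have h2 : 0 ≤ l1norm (xsol b) := l1norm_nonneg _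
  have habs : (a - b) * (l1norm (xsol b) - l1norm (xsol a)) ≤ |a - b| * l1norm (xsol 0) := by
    calc (a - b) * (l1norm (xsol b) - l1norm (xsol a))
        ≤ |(a - b) * (l1norm (xsol b) - l1norm (xsol a))| := le_abs_self _
      _ = |a - b| * |l1norm (xsol b) - l1norm (xsol a)| := abs_mul _ _
      _ ≤ |a - b| * l1norm (xsol 0) := by
          apply mul_le_mul_of_nonneg_left _ (abs_nonneg _)
          rw [abs_le]; constructor <;> linarith
  nlinarith [hc, habs]

lemma xsol_cont {η : ℝ} (hη : 0 ≤ η) :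
    Tendsto xsol (𝓝[Set.Ici 0] η) (𝓝 (xsol η)) := by
  rw [tendsto_iff_norm_sub_tendsto_zero]
  apply squeeze_zero' (Eventually.of_forall fun t => norm_nonneg _)
    (g := fun t => Real.sqrt (4 * |η - t| * l1norm (xsol 0)))
  · filter_upwards [self_mem_nhdsWithin] with t (ht : t ∈ Set.Ici 0)
    rw [show xsol t - xsol η = xsol t - xsol η from rfl]
    have h := dist_sq_le hxsol hη ht
    have hnn : 0 ≤ 4 * |η - t| * l1norm (xsol 0) :=
      mul_nonneg (mul_nonneg (by norm_num) (abs_nonneg _)) (l1norm_nonneg _)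
    rw [show (Real.sqrt (4 * |η - t| * l1norm (xsol 0))) =
      Real.sqrt (4 * |η - t| * l1norm (xsol 0)) from rfl]
    nlinarith [Real.sq_sqrt hnn, Real.sqrt_nonneg (4 * |η - t| * l1norm (xsol 0)),
      norm_nonneg (xsol t - xsol η)]
  · have h0 : Tendsto (fun t : ℝ => 4 * |η - t| * l1norm (xsol 0)) (𝓝[Set.Ici 0] η)
        (𝓝 0) := by
      have : Tendsto (fun t : ℝ => 4 * |η - t| * l1norm (xsol 0)) (𝓝 η)
          (𝓝 (4 * |η - η| * l1norm (xsol 0))) := by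
        apply Tendsto.mul_const
        exact (tendsto_const_nhds.sub tendsto_id).abs.const_mul 4
      simpa using this.mono_left nhdsWithin_le_nhds
    have h1 := (Real.continuous_sqrt.tendsto 0).comp h0
    simp only [Real.sqrt_zero] at h1
    exact h1

lemma coord_cont {η : ℝ} (hη : 0 ≤ η) (i : ℕ) :
    Tendsto (fun t => |xsol t i|) (𝓝[Set.Ici 0] η) (𝓝 |xsol η i|) := by
  have h0 : Tendsto (fun t => ‖xsol t - xsol η‖) (𝓝[Set.Ici 0] η) (𝓝 0) :=
    tendsto_iff_norm_sub_tendsto_zero.1 (xsol_cont hxsol hη)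
  have hc : Tendsto (fun t => xsol t i) (𝓝[Set.Ici 0] η) (𝓝 (xsol η i)) := by
    rw [tendsto_iff_norm_sub_tendsto_zero]
    apply squeeze_zero (fun t => norm_nonneg _) _ h0
    intro t
    have : xsol t i - xsol η i = (xsol t - xsol η) i := by simp [lp.coeFn_sub]
    rw [this]
    exact lp.norm_apply_le_norm (by norm_num) _ i
  exact (continuous_abs.tendsto _).comp hc

lemma l1_cont {η : ℝ} (hη : 0 ≤ η) :
    Tendsto (fun t => l1norm (xsol t)) (𝓝[Set.Ici 0] η) (𝓝 (l1norm (xsol η))) := by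
  rw [Metric.tendsto_nhds]
  intro ε hε
  set L := l1norm (xsol η) with hL
  -- lower bound eventually
  have hsum : Summable fun i => |xsol η i| := (hxsol η hη).1.summable'
  have hts : Tendsto (fun N => ∑ i ∈ Finset.range N, |xsol η i|) atTop (𝓝 L) :=
    hsum.hasSum.tendsto_sum_nat
  obtain ⟨N, hN⟩ := (hts.eventually (eventually_gt_nhds (by linarith : L - ε/2 < L))).exists
  have hg : Tendsto (fun t => ∑ i ∈ Finset.range N, |xsol t i|) (𝓝[Set.Ici 0] η)
      (𝓝 (∑ i ∈ Finset.range N, |xsol η i|)) :=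
    tendsto_finset_sum _ (fun i _ => coord_cont hxsol hη i)
  have hlow : ∀ᶠ t in 𝓝[Set.Ici 0] η, L - ε/2 < l1norm (xsol t) := by
    filter_upwards [hg.eventually (eventually_gt_nhds hN), self_mem_nhdsWithin]
      with t ht (ht0 : t ∈ Set.Ici 0)
    have : (∑ i ∈ Finset.range N, |xsol t i|) ≤ l1norm (xsol t) :=
      Summable.sum_le_tsum _ (fun i _ => abs_nonneg _) (hxsol t ht0).1.summable'
    linarith
  -- upper bound eventually
  have hup : ∀ᶠ t in 𝓝[Set.Ici 0] η, l1norm (xsol t) < L + ε/2 := by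
    rcases eq_or_lt_of_le hη with h0 | hpos
    · filter_upwards [self_mem_nhdsWithin] with t (ht : t ∈ Set.Ici 0)
      have h2 : l1norm (xsol t) ≤ L := by
        rw [hL, ← h0]; exact l1_mono hxsol le_rfl ht
      linarith
    · -- η > 0
      have hnorm : Tendsto (fun t => ‖xsol t‖ ^ 2) (𝓝[Set.Ici 0] η) (𝓝 (‖xsol η‖ ^ 2)) :=
        ((continuous_norm.tendsto _).comp (xsol_cont hxsol hη)).pow 2
      have hev1 : ∀ᶠ t in 𝓝[Set.Ici 0] η, |‖xsol t‖ ^ 2 - ‖xsol η‖ ^ 2| < ε/2 * η := by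
        have := hnorm
        rw [Metric.tendsto_nhds] at this
        have h' := this (ε/2 * η) (by positivity)
        filter_upwards [h'] with t ht
        rwa [Real.dist_eq] at ht
      have hev2 : ∀ᶠ t in 𝓝[Set.Ici 0] η, η/2 < t :=
        eventually_nhdsWithin_of_eventually_nhds (eventually_gt_nhds (by linarith))
      filter_upwards [hev1, hev2, self_mem_nhdsWithin] with t h1 h2 (ht0 : t ∈ Set.Ici 0)
      have htpos : 0 < t := by linarith
      have hmin := (hxsol t ht0).2.2 (xsol η) (hxsol η hη).1 (hxsol η hη).2.1
      unfold Rfun at hmin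
      have habs : ‖xsol η‖ ^ 2 - ‖xsol t‖ ^ 2 ≤ |‖xsol t‖ ^ 2 - ‖xsol η‖ ^ 2| := by
        rw [abs_sub_comm]; exact le_abs_self _
      nlinarith [hmin, h1, habs]
  filter_upwards [hlow, hup] with t h1 h2
  rw [Real.dist_eq, abs_lt]
  constructor <;> linarith

lemma slope_bound {η t : ℝ} (hη : 0 ≤ η) (ht : 0 ≤ t) (hne : t ≠ η) :
    |slope (fun s : ℝ => s * l1norm (xsol s) + (1 / 2) * ‖xsol s‖ ^ 2) η t
      - l1norm (xsol η)| ≤ |l1norm (xsol t) - l1norm (xsol η)| := by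
  set ft := l1norm (xsol t)
  set fη := l1norm (xsol η)
  set V : ℝ → ℝ := fun s => s * l1norm (xsol s) + (1 / 2) * ‖xsol s‖ ^ 2 with hV
  have h1 : V t ≤ V η + (t - η) * fη := by
    have := (hxsol t ht).2.2 (xsol η) (hxsol η hη).1 (hxsol η hη).2.1
    unfold Rfun at this
    simp only [hV]
    nlinarith [this]
  have h2 : V η ≤ V t + (η - t) * ft := by
    have := (hxsol η hη).2.2 (xsol t) (hxsol t ht).1 (hxsol t ht).2.1
    unfold Rfun at this
    simp only [hV]
    nlinarith [this]
  rw [slope_def_field]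
  have hd : t - η ≠ 0 := sub_ne_zero.2 hne
  have hub := le_abs_self (ft - fη)
  have hlb := neg_abs_le (ft - fη)
  rcases lt_or_gt_of_ne hne with hlt | hgt
  · -- t < η : DQ ∈ [fη, ft]
    have hdneg : t - η < 0 := by linarith
    have hq1 : fη ≤ (V t - V η) / (t - η) := by
      rw [le_div_iff_of_neg hdneg]; nlinarith [h1]
    have hq2 : (V t - V η) / (t - η) ≤ ft := by
      rw [div_le_iff_of_neg hdneg]; nlinarith [h2]
    rw [abs_le]; constructor <;> linarith
  · have hdpos : 0 < t - η := by linarith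
    have hq1 : (V t - V η) / (t - η) ≤ fη := by
      rw [div_le_iff₀ hdpos]; nlinarith [h1]
    have hq2 : ft ≤ (V t - V η) / (t - η) := by
      rw [le_div_iff₀ hdpos]; nlinarith [h2]
    rw [abs_le]; constructor <;> linarith

end Helpers

/-- Continuity of `η ↦ x_η` on `[0,∞)` and differentiability of the value function
`η ↦ η‖x_η‖₁ + ½‖x_η‖₂²`, whose derivative (within `[0,∞)`) equals `‖x_η‖₁`. -/
theorem RMinSolution_continuous_and_value_differentiable
    {H : Type*} [NormedAddCommGroup H] [InnerProductSpace ℝ H]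
    (K : ltwo →L[ℝ] H) (ydag : H)
    (xsol : ℝ → ltwo) (hxsol : ∀ η : ℝ, 0 ≤ η → IsRMinSolution K ydag η (xsol η)) :
    (∀ η : ℝ, 0 ≤ η → ∀ ηs : ℕ → ℝ, (∀ n, 0 ≤ ηs n) →
      Tendsto ηs atTop (nhds η) →
        Tendsto (fun n => xsol (ηs n)) atTop (nhds (xsol η))) ∧
    (∀ η : ℝ, 0 ≤ η →
      HasDerivWithinAt (fun t : ℝ => t * l1norm (xsol t) + (1 / 2) * ‖xsol t‖ ^ 2)
        (l1norm (xsol η)) (Set.Ici 0) η) := by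
  constructor
  · intro η hη ηs hpos hlim
    have h : Tendsto ηs atTop (𝓝[Set.Ici 0] η) :=
      tendsto_nhdsWithin_iff.2 ⟨hlim, Eventually.of_forall hpos⟩
    exact (xsol_cont hxsol hη).comp h
  · intro η hη
    rw [hasDerivWithinAt_iff_tendsto_slope]
    have hmono : 𝓝[Set.Ici 0 \ {η}] η ≤ 𝓝[Set.Ici 0] η :=
      nhdsWithin_mono _ Set.diff_subset
    have hf0 : Tendsto (fun t => |l1norm (xsol t) - l1norm (xsol η)|)
        (𝓝[Set.Ici 0 \ {η}] η) (𝓝 0) := by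
      have := ((l1_cont hxsol hη).mono_left hmono).sub (tendsto_const_nhds (x := l1norm (xsol η)))
      simpa using this.abs
    have key : Tendsto (fun t => |slope (fun s : ℝ => s * l1norm (xsol s)
        + (1 / 2) * ‖xsol s‖ ^ 2) η t - l1norm (xsol η)|)
        (𝓝[Set.Ici 0 \ {η}] η) (𝓝 0) := by
      apply squeeze_zero' (Eventually.of_forall fun t => abs_nonneg _) _ hf0
      filter_upwards [self_mem_nhdsWithin] with t ht
      exact slope_bound hxsol hη ht.1 ht.2
    rw [show (0:ℝ) = |l1norm (xsol η) - l1norm (xsol η)| by simp] at key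
    have : Tendsto (fun t => slope (fun s : ℝ => s * l1norm (xsol s)
        + (1 / 2) * ‖xsol s‖ ^ 2) η t) (𝓝[Set.Ici 0 \ {η}] η) (𝓝 (l1norm (xsol η))) := by
      rw [tendsto_iff_norm_sub_tendsto_zero]
      simpa [Real.norm_eq_abs] using key
    exact this
end
end
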